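/- For all real α > 0 and β ≥ 0 with 2β < α, ∫_0^∞ e^{-αx} (I₀(βx))² dx = (2/(πα)) K(2β/α), where K is the complete elliptic integral of the first kind. -/

import Mathlib

open Real MeasureTheory Set


noncomputable def besselI0 (ξ : ℝ) : ℝ :=
  (1 / (2 * π)) * ∫ θ in (-π)..π, Real.exp (ξ * Real.cos θ)

noncomputable def ellipticK (k : ℝ) : ℝ :=
  ∫ t in (0:ℝ)..1, 1 / (Real.sqrt (1 - t ^ 2) * Real.sqrt (1 - k ^ 2 * t ^ 2))




lemma aux_exp_integral {c : ℝ} (hc : 0 < c) :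
    ∫ x in Ioi (0:ℝ), Real.exp (-(c * x)) = c⁻¹ := by
  have h := integral_comp_mul_left_Ioi (fun x => Real.exp (-x)) 0 hc
  simpa [integral_exp_neg_Ioi_zero, integral_exp_Iic_zero] using h

lemma aux_cos_two_arctan (u : ℝ) :
    Real.cos (2 * Real.arctan u) = (1 - u^2) / (1 + u^2) := by
  have h0 : (0:ℝ) < 1 + u^2 := by positivity
  rw [Real.cos_two_mul, Real.cos_arctan, div_pow, one_pow, Real.sq_sqrt h0.le]
  field_simp
  ring

lemma aux_image_univ : (fun u : ℝ => 2 * Real.arctan u) '' univ = Ioo (-π) π := by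
  ext θ
  simp only [image_univ, mem_range, mem_Ioo]
  constructor
  · rintro ⟨u, rfl⟩
    have h := Real.arctan_mem_Ioo u
    constructor <;> [nlinarith [h.1]; nlinarith [h.2]]
  · rintro ⟨h1, h2⟩
    exact ⟨Real.tan (θ/2), by rw [Real.arctan_tan (by linarith) (by linarith)]; ring⟩

lemma aux_image_Ioi : (fun u : ℝ => 2 * Real.arctan u) '' Ioi 0 = Ioo 0 π := by
  ext θ
  simp only [mem_image, mem_Ioi, mem_Ioo]
  constructor
  · rintro ⟨u, hu, rfl⟩
    have h2 := (Real.arctan_mem_Ioo u).2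
    have h1 : 0 < Real.arctan u := by have := Real.arctan_strictMono hu; simpa using this
    constructor <;> nlinarith
  · rintro ⟨h1, h2⟩
    refine ⟨Real.tan (θ/2), ?_, ?_⟩
    · exact Real.tan_pos_of_pos_of_lt_pi_div_two (by linarith) (by linarith)
    · rw [Real.arctan_tan (by nlinarith [Real.pi_pos]) (by linarith)]; ring

lemma aux_cov {S : Set ℝ} (hS : MeasurableSet S) (g : ℝ → ℝ) :
    ∫ θ in (fun u : ℝ => 2 * Real.arctan u) '' S, g θ
      = ∫ u in S, (2 / (1 + u^2)) * g (2 * Real.arctan u) := by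
  rw [integral_image_eq_integral_abs_deriv_smul hS
      (f' := fun u => 2 / (1 + u^2))
      (fun u _ => by
        have := (Real.hasDerivAt_arctan u).const_mul 2
        have e : 2 * (1 / (1 + u^2)) = 2 / (1 + u^2) := by ring
        exact (e ▸ this).hasDerivWithinAt)
      (fun a _ b _ hab => Real.arctan_injective (mul_left_cancel₀ two_ne_zero hab)) g]
  apply setIntegral_congr_fun hS
  intro u _
  dsimp only
  rw [smul_eq_mul, abs_of_pos (by positivity)]


lemma aux_cos_integral {b c : ℝ} (hb : 0 ≤ b) (hbc : b < c) :
    ∫ θ in Ioo (-π) π, (c - b * Real.cos θ)⁻¹ = 2 * π / Real.sqrt (c^2 - b^2) := by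
  rw [← aux_image_univ, aux_cov MeasurableSet.univ]
  have hcb : 0 < c + b := by linarith
  have hcb' : 0 < c - b := by linarith
  set d := Real.sqrt ((c-b)/(c+b)) with hd
  have hd0 : 0 < d := Real.sqrt_pos.mpr (by positivity)
  have hd2 : d^2 = (c-b)/(c+b) := Real.sq_sqrt (by positivity)
  have key : ∀ u : ℝ, (2 / (1 + u^2)) * (c - b * Real.cos (2*Real.arctan u))⁻¹
      = (2/((c+b)*d^2)) * ((1 + (d⁻¹ * u)^2)⁻¹) := by
    intro u
    have h0 : (0:ℝ) < 1 + u^2 := by positivity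
    rw [aux_cos_two_arctan]
    have h1 : c - b * ((1 - u^2)/(1+u^2)) = ((c-b) + (c+b)*u^2)/(1+u^2) := by
      field_simp; ring
    rw [h1, mul_pow, hd2]
    have h2 : (0:ℝ) < (c-b) + (c+b)*u^2 := by nlinarith
    have hdi : (d⁻¹)^2 = (c+b)/(c-b) := by
      rw [inv_pow, hd2]; rw [inv_div]
    rw [inv_pow, hd2, inv_div]
    field_simp
  rw [Measure.restrict_univ]
  simp_rw [key]
  rw [MeasureTheory.integral_const_mul]
  rw [show (fun u : ℝ => (1 + (d⁻¹ * u)^2)⁻¹) = (fun u => (fun y : ℝ => (1+y^2)⁻¹) (d⁻¹ * u)) from rfl]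
  rw [MeasureTheory.Measure.integral_comp_mul_left (fun y : ℝ => (1+y^2)⁻¹) d⁻¹,
    integral_univ_inv_one_add_sq, inv_inv, abs_of_pos hd0, smul_eq_mul]
  -- now : 2/((c+b)*d^2) * (d * π) = 2π/√(c²-b²)
  have hsq : Real.sqrt (c^2 - b^2) = Real.sqrt (c+b) * Real.sqrt (c-b) := by
    rw [← Real.sqrt_mul hcb.le]
    ring_nf
  have hdval : d = Real.sqrt (c-b) / Real.sqrt (c+b) := by
    rw [hd, Real.sqrt_div hcb'.le]
  have e1 : Real.sqrt (c-b) ≠ 0 := (Real.sqrt_pos.mpr hcb').ne'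
  have e2 : Real.sqrt (c+b) ≠ 0 := (Real.sqrt_pos.mpr hcb).ne'
  have m : Real.sqrt (c-b) * Real.sqrt (c-b) = c - b := Real.mul_self_sqrt hcb'.le
  rw [hsq, hd2, hdval]
  field_simp
  linear_combination m


lemma aux_hasDeriv2 (C : ℝ) {s : ℝ} (hs : s ∈ Ioo (0:ℝ) 1) :
    HasDerivAt (fun s => C * s / Real.sqrt (1 - s^2))
      (C / ((1-s^2) * Real.sqrt (1 - s^2))) s := by
  have hq : 0 < 1 - s^2 := by
    have := hs.1; have := hs.2; nlinarith
  have hsq : 0 < Real.sqrt (1-s^2) := Real.sqrt_pos.mpr hq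
  have m : Real.sqrt (1-s^2) * Real.sqrt (1-s^2) = 1 - s^2 := Real.mul_self_sqrt hq.le
  have hinner : HasDerivAt (fun x : ℝ => 1 - x^2) (-(2*s)) s := by
    simpa using (hasDerivAt_pow 2 s).const_sub 1
  have h2 : HasDerivAt (fun x : ℝ => Real.sqrt (1 - x^2))
      (-s / Real.sqrt (1-s^2)) s := by
    have := (Real.hasDerivAt_sqrt hq.ne').comp s hinner
    refine this.congr_deriv ?_
    symm
    ring
  have h1 : HasDerivAt (fun x : ℝ => C * x) C s := by
    simpa using (hasDerivAt_id s).const_mul C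
  have := h1.div h2 hsq.ne'
  refine this.congr_deriv ?_
  symm
  rw [Real.sq_sqrt hq.le]
  field_simp
  linear_combination (-C) * m

lemma aux_image2 {C : ℝ} (hC : 0 < C) :
    (fun s : ℝ => C * s / Real.sqrt (1 - s^2)) '' Ioo 0 1 = Ioi 0 := by
  ext u
  simp only [mem_image, mem_Ioo, mem_Ioi]
  constructor
  · rintro ⟨s, ⟨h0, h1⟩, rfl⟩
    have hq : 0 < Real.sqrt (1 - s^2) := Real.sqrt_pos.mpr (by nlinarith)
    positivity
  · intro hu
    have hR : 0 < Real.sqrt (u^2 + C^2) := Real.sqrt_pos.mpr (by positivity)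
    have hR2 : (Real.sqrt (u^2 + C^2))^2 = u^2 + C^2 := Real.sq_sqrt (by positivity)
    refine ⟨u / Real.sqrt (u^2 + C^2), ⟨by positivity, ?_⟩, ?_⟩
    · rw [div_lt_one hR]
      exact (Real.lt_sqrt hu.le).mpr (by nlinarith)
    · have h1 : 1 - (u / Real.sqrt (u^2 + C^2))^2 = C^2 / (u^2 + C^2) := by
        rw [div_pow, hR2]; field_simp; ring
      rw [h1, Real.sqrt_div (sq_nonneg C), Real.sqrt_sq hC.le]
      field_simp

lemma aux_injOn2 {C : ℝ} (hC : 0 < C) :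
    InjOn (fun s : ℝ => C * s / Real.sqrt (1 - s^2)) (Ioo 0 1) := by
  rintro a ⟨ha0, ha1⟩ b ⟨hb0, hb1⟩ hab
  have hqa : 0 < 1 - a^2 := by nlinarith
  have hqb : 0 < 1 - b^2 := by nlinarith
  have hsa : 0 < Real.sqrt (1-a^2) := Real.sqrt_pos.mpr hqa
  have hsb : 0 < Real.sqrt (1-b^2) := Real.sqrt_pos.mpr hqb
  have ma : Real.sqrt (1-a^2) * Real.sqrt (1-a^2) = 1 - a^2 := Real.mul_self_sqrt hqa.le
  have mb : Real.sqrt (1-b^2) * Real.sqrt (1-b^2) = 1 - b^2 := Real.mul_self_sqrt hqb.le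
  have h : C * a * Real.sqrt (1-b^2) = C * b * Real.sqrt (1-a^2) := by
    field_simp at hab
    linear_combination C * hab
  have ma2 : Real.sqrt (1-a^2)^2 = 1-a^2 := Real.sq_sqrt hqa.le
  have mb2 : Real.sqrt (1-b^2)^2 = 1-b^2 := Real.sq_sqrt hqb.le
  have h2 : (C * a * Real.sqrt (1-b^2))^2 = (C * b * Real.sqrt (1-a^2))^2 := by rw [h]
  have h3 : C^2 * a^2 * (1-b^2) = C^2 * b^2 * (1-a^2) := by
    linear_combination h2 - C^2*a^2*mb2 + C^2*b^2*ma2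
  have h4 : C^2 * (a^2 - b^2) = 0 := by linear_combination h3
  have h5 : a^2 - b^2 = 0 := by
    rcases mul_eq_zero.mp h4 with h | h
    · exact absurd h (by positivity)
    · exact h
  have h6 : (a - b) * (a + b) = 0 := by linear_combination h5
  rcases mul_eq_zero.mp h6 with h | h
  · linarith
  · linarith


lemma aux_alg (A B Q K q a : ℝ) (hA : A ≠ 0) (hB : B ≠ 0) (hQ : Q ≠ 0)
    (hK : K ≠ 0) (hq : q ≠ 0) (ha : B * B = a) :
    A/B/(q*Q) * (2 * (A*(B*K)/q)⁻¹) = 2/a * (Q*K)⁻¹ := by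
  subst ha
  field_simp


lemma aux_phi_integral {α β : ℝ} (hα : 0 < α) (hβ : 0 ≤ β) (h : 2*β < α) :
    ∫ φ in Ioo 0 π, (Real.sqrt ((α - β - β*Real.cos φ) * (α + β - β*Real.cos φ)))⁻¹
      = (2/α) * ∫ s in Ioo (0:ℝ) 1,
          (Real.sqrt (1-s^2) * Real.sqrt (1 - (2*β/α)^2 * s^2))⁻¹ := by
  have hab : 0 < α - 2*β := by linarith
  rw [← aux_image_Ioi, aux_cov measurableSet_Ioi]
  -- step 1: integrand over Ioi 0 equals 2 / √(((α-2β)+αu²)(α+(α+2β)u²))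
  have key1 : ∀ u : ℝ, (2 / (1 + u^2)) *
      (Real.sqrt ((α - β - β*Real.cos (2*Real.arctan u)) * (α + β - β*Real.cos (2*Real.arctan u))))⁻¹
      = 2 * (Real.sqrt (((α-2*β) + α*u^2) * (α + (α+2*β)*u^2)))⁻¹ := by
    intro u
    have h0 : (0:ℝ) < 1 + u^2 := by positivity
    rw [aux_cos_two_arctan]
    have e1 : α - β - β*((1-u^2)/(1+u^2)) = ((α-2*β) + α*u^2)/(1+u^2) := by
      field_simp; ring
    have e2 : α + β - β*((1-u^2)/(1+u^2)) = (α + (α+2*β)*u^2)/(1+u^2) := by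
      field_simp; ring
    have hA : (0:ℝ) < (α-2*β) + α*u^2 := by positivity
    have hB : (0:ℝ) < α + (α+2*β)*u^2 := by positivity
    have hS : 0 < Real.sqrt (((α-2*β) + α*u^2) * (α + (α+2*β)*u^2)) :=
      Real.sqrt_pos.mpr (by positivity)
    rw [e1, e2, div_mul_div_comm, ← sq, Real.sqrt_div (by positivity),
      Real.sqrt_sq h0.le]
    field_simp
  simp_rw [key1]
  -- step 2: substitute u = C s / √(1-s²)
  obtain ⟨k, hk⟩ : ∃ k : ℝ, k = 2*β/α := ⟨_, rfl⟩
  rw [← hk]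
  set C : ℝ := Real.sqrt ((α-2*β)/α) with hC
  have hCpos : 0 < C := Real.sqrt_pos.mpr (by positivity)
  have hC2 : C^2 = (α-2*β)/α := Real.sq_sqrt (by positivity)
  rw [← aux_image2 hCpos,
    integral_image_eq_integral_abs_deriv_smul measurableSet_Ioo
      (fun s hs => (aux_hasDeriv2 C hs).hasDerivWithinAt) (aux_injOn2 hCpos)]
  rw [← MeasureTheory.integral_const_mul]
  apply setIntegral_congr_fun measurableSet_Ioo
  rintro s ⟨hs0, hs1⟩
  dsimp only
  have hq : 0 < 1 - s^2 := by nlinarith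
  have hsq : 0 < Real.sqrt (1-s^2) := Real.sqrt_pos.mpr hq
  have hq2 : Real.sqrt (1-s^2)^2 = 1-s^2 := Real.sq_sqrt hq.le
  have hu2 : (C*s/Real.sqrt (1-s^2))^2 = (α-2*β)*s^2/(α*(1-s^2)) := by
    rw [div_pow, mul_pow, hq2, hC2]
    field_simp
  have hks : 0 < 1 - k^2*s^2 := by
    have hk1 : k < 1 := by rw [hk]; rw [div_lt_one hα]; linarith
    have hk0 : 0 ≤ k := by rw [hk]; positivity
    nlinarith
  have eA : (α-2*β) + α*(C*s/Real.sqrt (1-s^2))^2 = (α-2*β)/(1-s^2) := by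
    rw [hu2]
    field_simp
    ring
  have eB : α + (α+2*β)*(C*s/Real.sqrt (1-s^2))^2 = α*(1-k^2*s^2)/(1-s^2) := by
    rw [hu2, hk]
    field_simp
    ring
  rw [eA, eB]
  have hks' : 0 < Real.sqrt (1 - k^2*s^2) := Real.sqrt_pos.mpr hks
  have eP : (α-2*β)/(1-s^2) * (α*(1-k^2*s^2)/(1-s^2))
      = ((α-2*β)*(α*(1-k^2*s^2)))/(1-s^2)^2 := by field_simp
  rw [eP, Real.sqrt_div (by positivity), Real.sqrt_sq hq.le,
    Real.sqrt_mul hab.le, Real.sqrt_mul hα.le]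
  have hCval : C = Real.sqrt (α-2*β) / Real.sqrt α := by
    rw [hC, Real.sqrt_div hab.le]
  have hsa : 0 < Real.sqrt α := Real.sqrt_pos.mpr hα
  have hsb : 0 < Real.sqrt (α-2*β) := Real.sqrt_pos.mpr hab
  have msa : Real.sqrt α * Real.sqrt α = α := Real.mul_self_sqrt hα.le
  rw [smul_eq_mul, abs_of_pos (by positivity), hCval]
  exact aux_alg _ _ _ _ _ _ hsb.ne' hsa.ne' hsq.ne' hks'.ne' hq.ne' msa

lemma aux_integrableOn_TT {f : ℝ × ℝ → ℝ} (hf : Continuous f) :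
    IntegrableOn f (Ioc (-π) π ×ˢ Ioc (-π) π) :=
  (hf.continuousOn.integrableOn_compact (isCompact_Icc.prod isCompact_Icc)).mono_set
    (prod_mono Ioc_subset_Icc_self Ioc_subset_Icc_self)

theorem laplace_integral_besselI0_sq (α β : ℝ) (hα : 0 < α) (hβ : 0 ≤ β)
    (h : 2 * β < α) :
    ∫ x in Set.Ioi (0:ℝ), Real.exp (-α * x) * (besselI0 (β * x)) ^ 2
      = (2 / (π * α)) * ellipticK (2 * β / α) := by
  have hπ : 0 < π := Real.pi_pos
  have hab : 0 < α - 2*β := by linarith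
  set T : Set ℝ := Ioc (-π) π with hT
  have hTmeas : MeasurableSet T := measurableSet_Ioc
  have prodMeas : (volume : Measure (ℝ×ℝ)).restrict (T ×ˢ T)
      = (volume.restrict T).prod (volume.restrict T) := by
    rw [Measure.volume_eq_prod, ← Measure.prod_restrict]
  set J : ℝ → ℝ := fun x => ∫ θ in T, Real.exp (β * x * Real.cos θ) with hJ
  set F : ℝ × (ℝ × ℝ) → ℝ :=
    fun z => Real.exp (-(α - β * Real.cos z.2.1 - β * Real.cos z.2.2) * z.1) with hF
  have hFcont : Continuous F := by
    apply Real.continuous_exp.comp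
    fun_prop
  have hcos : ∀ t : ℝ, β * Real.cos t ≤ β := fun t =>
    mul_le_of_le_one_right hβ (Real.cos_le_one t)
  -- rewrite besselI0 in terms of J
  have hbes : ∀ x : ℝ, Real.exp (-α * x) * (besselI0 (β * x)) ^ 2
      = (1/(2*π))^2 * (Real.exp (-α*x) * (J x * J x)) := by
    intro x
    rw [besselI0, intervalIntegral.integral_of_le (by linarith), mul_pow]
    rw [hJ]
    ring
  simp_rw [hbes]
  rw [MeasureTheory.integral_const_mul]
  -- product formula for fixed x
  have hstep1 : ∀ x : ℝ, Real.exp (-α*x) * (J x * J x)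
      = ∫ p in T ×ˢ T, F (x, p) := by
    intro x
    have hIx : Integrable (fun p => F (x, p)) ((volume.restrict T).prod (volume.restrict T)) := by
      have h1 : IntegrableOn (fun p => F (x, p)) (T ×ˢ T) :=
        aux_integrableOn_TT (hFcont.comp (by fun_prop))
      exact prodMeas ▸ h1
    rw [show (∫ p in T ×ˢ T, F (x, p)) = ∫ p, F (x, p) ∂((volume.restrict T).prod (volume.restrict T)) by
      rw [← prodMeas]]
    rw [MeasureTheory.integral_prod _ hIx]
    have inner : ∀ θ : ℝ, (∫ φ in T, F (x, (θ, φ)))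
        = Real.exp (-(α - β * Real.cos θ) * x) * J x := by
      intro θ
      rw [hJ]
      rw [← MeasureTheory.integral_const_mul]
      apply setIntegral_congr_fun hTmeas
      intro φ _
      rw [hF]
      dsimp only
      rw [← Real.exp_add]
      congr 1
      ring
    simp_rw [inner]
    rw [MeasureTheory.integral_mul_const]
    have : (∫ θ in T, Real.exp (-(α - β * Real.cos θ) * x))
        = Real.exp (-α * x) * J x := by
      rw [hJ, ← MeasureTheory.integral_const_mul]
      apply setIntegral_congr_fun hTmeas
      intro θ _
      dsimp only
      rw [← Real.exp_add]
      congr 1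
      ring
    rw [this]
    ring
  simp_rw [hstep1]
  -- Fubini
  haveI : IsFiniteMeasure (volume.restrict (T ×ˢ T)) := by
    constructor
    rw [Measure.restrict_apply_univ, Measure.volume_eq_prod, Measure.prod_prod]
    exact ENNReal.mul_lt_top measure_Ioc_lt_top measure_Ioc_lt_top
  have hswap : (∫ x in Ioi (0:ℝ), ∫ p in T ×ˢ T, F (x, p))
      = ∫ p in T ×ˢ T, ∫ x in Ioi (0:ℝ), F (x, p) := by
    apply MeasureTheory.integral_integral_swap
    have hbound : Integrable (fun z : ℝ × (ℝ × ℝ) => Real.exp (-(α - 2*β) * z.1))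
        ((volume.restrict (Ioi 0)).prod (volume.restrict (T ×ˢ T))) := by
      apply (MeasureTheory.integrable_prod_iff ?_).mpr
      constructor
      · filter_upwards with x
        exact integrable_const _
      · simp only [norm_eq_abs, abs_of_pos (Real.exp_pos _), integral_const, smul_eq_mul]
        exact (exp_neg_integrableOn_Ioi 0 (by linarith)).const_mul _
      · exact ((Real.continuous_exp.comp (by fun_prop)).aestronglyMeasurable)
    apply Integrable.mono' hbound
    · exact (hFcont.comp (by fun_prop)).aestronglyMeasurable
    · rw [Measure.prod_restrict, ← Measure.volume_eq_prod]
      filter_upwards [ae_restrict_mem (measurableSet_Ioi.prod (hTmeas.prod hTmeas))] with z hz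
      obtain ⟨hx, -⟩ := hz
      rw [Function.uncurry]
      rw [hF]
      dsimp only
      rw [norm_eq_abs, abs_of_pos (Real.exp_pos _)]
      apply Real.exp_le_exp.mpr
      have h1 : α - 2*β ≤ α - β * Real.cos z.2.1 - β * Real.cos z.2.2 := by
        have := hcos z.2.1; have := hcos z.2.2; linarith
      have := mul_le_mul_of_nonneg_right h1 (le_of_lt hx)
      linarith
  rw [hswap]
  -- evaluate the inner Laplace integral
  have hlap : ∀ p ∈ T ×ˢ T, (∫ x in Ioi (0:ℝ), F (x, p))
      = (α - β * Real.cos p.1 - β * Real.cos p.2)⁻¹ := by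
    rintro ⟨θ, φ⟩ -
    have hc : 0 < α - β * Real.cos θ - β * Real.cos φ := by
      have := hcos θ; have := hcos φ; linarith
    have := aux_exp_integral hc
    rw [hF]
    dsimp only
    simp_rw [neg_mul] at this ⊢
    exact this
  rw [setIntegral_congr_fun (hTmeas.prod hTmeas) hlap]
  -- iterated integral over the torus
  have hIinv : Integrable (fun p : ℝ × ℝ => (α - β * Real.cos p.1 - β * Real.cos p.2)⁻¹)
      ((volume.restrict T).prod (volume.restrict T)) := by
    have h1 : IntegrableOn (fun p : ℝ × ℝ => (α - β * Real.cos p.1 - β * Real.cos p.2)⁻¹)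
        (T ×ˢ T) := by
      apply aux_integrableOn_TT
      apply Continuous.inv₀ (by fun_prop)
      intro p
      have := hcos p.1; have := hcos p.2
      intro hzero
      nlinarith [hzero]
    exact prodMeas ▸ h1
  rw [show (∫ p in T ×ˢ T, (α - β * Real.cos p.1 - β * Real.cos p.2)⁻¹)
      = ∫ p, (α - β * Real.cos p.1 - β * Real.cos p.2)⁻¹
          ∂((volume.restrict T).prod (volume.restrict T)) by rw [← prodMeas]]
  rw [MeasureTheory.integral_prod _ hIinv]
  -- inner integral over φ
  have hphi : ∀ θ : ℝ, (∫ φ in T, (α - β * Real.cos θ - β * Real.cos φ)⁻¹)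
      = 2 * π * (Real.sqrt ((α - β - β*Real.cos θ) * (α + β - β*Real.cos θ)))⁻¹ := by
    intro θ
    rw [hT, MeasureTheory.integral_Ioc_eq_integral_Ioo]
    rw [aux_cos_integral hβ (by have := hcos θ; linarith)]
    rw [show (α - β * Real.cos θ)^2 - β^2
        = (α - β - β*Real.cos θ) * (α + β - β*Real.cos θ) by ring]
    rw [div_eq_mul_inv]
  simp_rw [hphi]
  rw [MeasureTheory.integral_const_mul]
  -- symmetry: reduce to (0, π)
  set g : ℝ → ℝ := fun θ => (Real.sqrt ((α - β - β*Real.cos θ) * (α + β - β*Real.cos θ)))⁻¹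
    with hg
  have hgcont : Continuous g := by
    rw [hg]
    apply Continuous.inv₀
    · fun_prop
    · intro θ
      have := hcos θ
      have hpos : 0 < (α - β - β*Real.cos θ) * (α + β - β*Real.cos θ) := by nlinarith
      exact (Real.sqrt_pos.mpr hpos).ne'
  have hsym : (∫ θ in T, g θ) = 2 * ∫ θ in Ioo 0 π, g θ := by
    rw [hT, MeasureTheory.integral_Ioc_eq_integral_Ioo,
      ← MeasureTheory.integral_Ioc_eq_integral_Ioo,
      ← intervalIntegral.integral_of_le (by linarith)]
    rw [← intervalIntegral.integral_add_adjacent_intervals (b := (0:ℝ))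
      (hgcont.intervalIntegrable _ _) (hgcont.intervalIntegrable _ _)]
    have hrefl : (∫ θ in (-π)..(0:ℝ), g θ) = ∫ θ in (0:ℝ)..π, g θ := by
      have hcomp := intervalIntegral.integral_comp_neg (a := (0:ℝ)) (b := π) g
      rw [neg_zero] at hcomp
      rw [← hcomp]
      apply intervalIntegral.integral_congr
      intro θ _
      rw [hg]
      dsimp only
      rw [Real.cos_neg]
    rw [hrefl, intervalIntegral.integral_of_le hπ.le,
      MeasureTheory.integral_Ioc_eq_integral_Ioo]
    ring
  rw [hsym]
  rw [hg]
  simp_rw [aux_phi_integral hα hβ h]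
  -- identify with ellipticK
  have hK : ellipticK (2*β/α) = ∫ s in Ioo (0:ℝ) 1,
      (Real.sqrt (1-s^2) * Real.sqrt (1 - (2*β/α)^2 * s^2))⁻¹ := by
    rw [ellipticK, intervalIntegral.integral_of_le (by norm_num),
      MeasureTheory.integral_Ioc_eq_integral_Ioo]
    apply setIntegral_congr_fun measurableSet_Ioo
    intro s _
    dsimp only
    rw [one_div]
  rw [← hK]
  have hK2 : ellipticK (2*β/α) = ellipticK (2*β/α) := rfl
  field_simp
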